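/- Suppose k ≤ C√n for some constant C > 0, γ = C_γ·√(log n), λ ≥ C_λ·k^{r/2}·√(log n), with C_γ ≥ 1 + C_r and C_λ ≥ C', where C_r = 2·3^r(√(2r)+1) and C' = C_γ + C_r + 1. Then with probability at least 1 − n^{−1/2} (over W), the only local maximum of H in the set A is θ: that is, for every σ ∈ A with σ ≠ θ there exists σ' ∈ {−1,0,1}^n with Hamming distance d_H(σ,σ') = 1 and H(σ') > H(σ). -/

import Mathlib

open Finset MeasureTheory ProbabilityTheory

/-- Number of nonzero coordinates of a vector (the "ℓ₀ norm"). -/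
noncomputable def suppCard {n : ℕ} (σ : Fin n → ℝ) : ℕ :=
  (Finset.univ.filter (fun m => σ m ≠ 0)).card

/-- The regularized Hamiltonian H(σ) = ⟨σ^{⊗r}, Y⟩ − γ‖σ‖₀^r, where
Y(f) = (λ/k^{r/2})·∏_l θ(f l) + W(f). -/
noncomputable def Ham (n r k : ℕ) (lam γ : ℝ) (θ : Fin n → ℝ)
    (W : (Fin r → Fin n) → ℝ) (σ : Fin n → ℝ) : ℝ :=
  (∑ f : Fin r → Fin n,
      (∏ l : Fin r, σ (f l)) *
        ((lam / (k : ℝ) ^ ((r : ℝ) / 2)) * (∏ l : Fin r, θ (f l)) + W f))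
    - γ * (suppCard σ : ℝ) ^ r

/-- The set A: all σ ∈ {−1,0,1}^n with
(λ/k^{r/2})(⟨σ,θ⟩−1)^{r−1} ≥ C'√(log n)(‖σ‖₀−1)^{r−1}, ‖σ‖₀ ≥ 2, ⟨σ,θ⟩ ≥ 2. -/
def memA (n r k : ℕ) (lam C' : ℝ) (θ σ : Fin n → ℝ) : Prop :=
  (∀ m, σ m = -1 ∨ σ m = 0 ∨ σ m = 1) ∧
  C' * Real.sqrt (Real.log n) * ((suppCard σ : ℝ) - 1) ^ (r - 1) ≤
    (lam / (k : ℝ) ^ ((r : ℝ) / 2)) * ((∑ m, σ m * θ m) - 1) ^ (r - 1) ∧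
  2 ≤ suppCard σ ∧ (2 : ℝ) ≤ ∑ m, σ m * θ m

section Aux
open Real Set
open scoped ENNReal NNReal


lemma l1_bound (n r : ℕ) (σ σ' : Fin n → ℝ) (m : Fin n)
    (hσ : ∀ i, |σ i| ≤ 1) (hσ' : ∀ i, |σ' i| ≤ 1)
    (hagree : ∀ i, i ≠ m → σ' i = σ i) :
    ∑ f : Fin r → Fin n, |(∏ l, σ' (f l)) - (∏ l, σ (f l))| ≤
      2 * (((insert m (univ.filter (fun i => σ i ≠ 0))).card : ℝ) ^ r -
        (((insert m (univ.filter (fun i => σ i ≠ 0))).card : ℝ) - 1) ^ r) := by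
  set T : Finset (Fin n) := insert m (univ.filter (fun i => σ i ≠ 0)) with hT
  have hmT : m ∈ T := Finset.mem_insert_self _ _
  set B : Finset (Fin r → Fin n) :=
    (Fintype.piFinset (fun _ : Fin r => T)) \ (Fintype.piFinset (fun _ : Fin r => T.erase m))
    with hB
  have hdiff0 : ∀ f : Fin r → Fin n, f ∉ B →
      |(∏ l, σ' (f l)) - (∏ l, σ (f l))| = 0 := by
    intro f hf
    rw [abs_eq_zero, sub_eq_zero]
    rw [hB, Finset.mem_sdiff, not_and_or, not_not] at hf
    rcases hf with h | h
    · -- some coordinate outside T : both products are 0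
      rw [Fintype.mem_piFinset] at h
      push_neg at h
      obtain ⟨l, hl⟩ := h
      have h1 : σ (f l) = 0 := by
        by_contra h0
        exact hl (Finset.mem_insert_of_mem (by simpa using h0))
      have hne : f l ≠ m := fun hc => hl (hc ▸ hmT)
      have h2 : σ' (f l) = 0 := by rw [hagree _ hne, h1]
      rw [Finset.prod_eq_zero (Finset.mem_univ l) h2,
        Finset.prod_eq_zero (Finset.mem_univ l) h1]
    · -- never hits m : products equal
      rw [Fintype.mem_piFinset] at h
      exact Finset.prod_congr rfl fun l _ =>
        hagree _ (Finset.ne_of_mem_erase (h l))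
  have hsum : ∑ f : Fin r → Fin n, |(∏ l, σ' (f l)) - (∏ l, σ (f l))| =
      ∑ f ∈ B, |(∏ l, σ' (f l)) - (∏ l, σ (f l))| := by
    rw [← Finset.sum_subset (Finset.subset_univ B)]
    intro f _ hf; exact hdiff0 f hf
  have habs : ∀ f : Fin r → Fin n, |(∏ l, σ' (f l)) - (∏ l, σ (f l))| ≤ 2 := by
    intro f
    have h1 : |∏ l, σ' (f l)| ≤ 1 := by
      rw [Finset.abs_prod]
      exact Finset.prod_le_one (fun l _ => abs_nonneg _) (fun l _ => hσ' _)
    have h2 : |∏ l, σ (f l)| ≤ 1 := by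
      rw [Finset.abs_prod]
      exact Finset.prod_le_one (fun l _ => abs_nonneg _) (fun l _ => hσ _)
    calc |(∏ l, σ' (f l)) - (∏ l, σ (f l))| ≤ |∏ l, σ' (f l)| + |∏ l, σ (f l)| :=
          abs_sub _ _
      _ ≤ 2 := by linarith
  have hcard : (B.card : ℝ) = (T.card : ℝ) ^ r - ((T.card : ℝ) - 1) ^ r := by
    have hsub : (Fintype.piFinset (fun _ : Fin r => T.erase m)) ⊆
        (Fintype.piFinset (fun _ : Fin r => T)) :=
      Fintype.piFinset_subset _ _ (fun _ => Finset.erase_subset _ _)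
    rw [hB, Finset.card_sdiff_of_subset hsub]
    have h1 : (Fintype.piFinset (fun _ : Fin r => T)).card = T.card ^ r := by
      simp [Fintype.card_piFinset]
    have h2 : (Fintype.piFinset (fun _ : Fin r => T.erase m)).card = (T.card - 1) ^ r := by
      simp [Fintype.card_piFinset, Finset.card_erase_of_mem hmT]
    rw [Nat.cast_sub (by rw [h1, h2]; exact Nat.pow_le_pow_left (Nat.sub_le _ _) r), h1, h2]
    have hT1 : 1 ≤ T.card := Finset.card_pos.mpr ⟨m, hmT⟩
    push_cast [Nat.cast_sub hT1]
    ring_nf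
  calc ∑ f : Fin r → Fin n, |(∏ l, σ' (f l)) - (∏ l, σ (f l))|
      = ∑ f ∈ B, |(∏ l, σ' (f l)) - (∏ l, σ (f l))| := hsum
    _ ≤ ∑ f ∈ B, 2 := Finset.sum_le_sum (fun f _ => habs f)
    _ = 2 * (B.card : ℝ) := by rw [Finset.sum_const]; ring
    _ = _ := by rw [hcard]
lemma pow_sub_pow_ge (r : ℕ) (x y : ℝ) (hy : 0 ≤ y) (hxy : y ≤ x) :
    (r : ℝ) * y ^ (r - 1) * (x - y) ≤ x ^ r - y ^ r := by
  rw [← geom_sum₂_mul x y r]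
  have key : ∀ i ∈ Finset.range r, y ^ (r-1) ≤ x ^ i * y ^ (r - 1 - i) := by
    intro i hi
    rw [Finset.mem_range] at hi
    have : y ^ (r-1) = y ^ i * y ^ (r - 1 - i) := by
      rw [← pow_add]; congr 1; omega
    rw [this]
    exact mul_le_mul_of_nonneg_right (pow_le_pow_left₀ hy hxy i) (pow_nonneg hy _)
  have h1 : (r : ℝ) * y ^ (r-1) ≤ ∑ i ∈ Finset.range r, x ^ i * y ^ (r - 1 - i) := by
    calc (r : ℝ) * y ^ (r-1) = ∑ _i ∈ Finset.range r, y ^ (r-1) := by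
          rw [Finset.sum_const, Finset.card_range, nsmul_eq_mul]
      _ ≤ _ := Finset.sum_le_sum key
  exact mul_le_mul_of_nonneg_right h1 (by linarith)

lemma pow_sub_pow_le (r : ℕ) (hr : 1 ≤ r) (s t : ℝ) (hs : 2 ≤ s) (ht2 : 2 ≤ t) (hts : t ≤ s + 1) :
    t ^ r - (t - 1) ^ r ≤ 3 ^ r * (s - 1) ^ (r - 1) := by
  have h1 : t ^ r - (t-1) ^ r = (∑ i ∈ Finset.range r, t ^ i * (t-1) ^ (r - 1 - i)) := by
    rw [← geom_sum₂_mul t (t-1) r]; ring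
  have hterm : ∀ i ∈ Finset.range r, t ^ i * (t-1) ^ (r-1-i) ≤ (3/2)^i * s ^ (r-1) := by
    intro i hi
    rw [Finset.mem_range] at hi
    have hts' : t ≤ (3/2) * s := by linarith
    have h2 : t ^ i ≤ ((3/2) * s) ^ i := pow_le_pow_left₀ (by linarith) hts' i
    have h3 : (t-1) ^ (r-1-i) ≤ s ^ (r-1-i) :=
      pow_le_pow_left₀ (by linarith) (by linarith) _
    calc t ^ i * (t-1) ^ (r-1-i) ≤ ((3/2)*s) ^ i * s ^ (r-1-i) :=
          mul_le_mul h2 h3 (pow_nonneg (by linarith) _) (pow_nonneg (by positivity) _)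
      _ = (3/2)^i * (s ^ i * s ^ (r-1-i)) := by rw [mul_pow]; ring
      _ ≤ (3/2)^i * s ^ (r-1) := by
          rw [← pow_add]
          apply mul_le_mul_of_nonneg_left _ (by positivity)
          apply pow_le_pow_right₀ (by linarith)
          omega
  have hgeo : ∑ i ∈ Finset.range r, ((3:ℝ)/2)^i ≤ 2 * (3/2)^r := by
    rw [geom_sum_eq (by norm_num)]
    rw [div_le_iff₀ (by norm_num)]
    ring_nf
    nlinarith [pow_nonneg (by norm_num : (0:ℝ) ≤ 3/2) r]
  have hb : s ^ (r-1) ≤ 2^(r-1) * (s-1)^(r-1) := by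
    rw [← mul_pow]
    exact pow_le_pow_left₀ (by linarith) (by linarith) _
  calc t ^ r - (t-1)^r = ∑ i ∈ Finset.range r, t ^ i * (t-1) ^ (r - 1 - i) := h1
    _ ≤ ∑ i ∈ Finset.range r, (3/2)^i * s ^ (r-1) :=
        Finset.sum_le_sum hterm
    _ = (∑ i ∈ Finset.range r, ((3:ℝ)/2)^i) * s ^ (r-1) := by rw [Finset.sum_mul]
    _ ≤ (2 * (3/2)^r) * (2^(r-1) * (s-1)^(r-1)) := by
        apply mul_le_mul hgeo hb (by positivity)
        positivity
    _ = ((3:ℝ)/2 * 2)^r * (s-1)^(r-1) := by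
        have h1 : (2:ℝ) * 2^(r-1) = 2^r := by
          rw [mul_comm, ← pow_succ]
          congr 1; omega
        rw [mul_pow]
        calc 2 * (3/2)^r * (2^(r-1) * (s-1)^(r-1))
            = (3/2)^r * (2*2^(r-1)) * (s-1)^(r-1) := by ring
          _ = (3/2)^r * 2^r * (s-1)^(r-1) := by rw [h1]
    _ = 3 ^ r * (s - 1) ^ (r - 1) := by norm_num

lemma sum_prod_eq_pow (n r : ℕ) (g : Fin n → ℝ) :
    ∑ f : Fin r → Fin n, ∏ l : Fin r, g (f l) = (∑ m, g m) ^ r := by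
  rw [← Fin.prod_const r (∑ m, g m), Finset.prod_univ_sum]
  simp [Fintype.piFinset_univ]

lemma Ham_eq (n r k : ℕ) (lam γ : ℝ) (θ : Fin n → ℝ) (W : (Fin r → Fin n) → ℝ)
    (σ : Fin n → ℝ) :
    Ham n r k lam γ θ W σ =
      (lam / (k : ℝ) ^ ((r : ℝ) / 2)) * (∑ m, σ m * θ m) ^ r
        + (∑ f : Fin r → Fin n, (∏ l : Fin r, σ (f l)) * W f)
        - γ * (suppCard σ : ℝ) ^ r := by
  unfold Ham
  congr 1
  rw [← sum_prod_eq_pow n r (fun m => σ m * θ m)]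
  rw [Finset.mul_sum, ← Finset.sum_add_distrib]
  congr 1; ext f
  rw [Finset.prod_mul_distrib]
  ring

lemma gauss_tail_one_sided (τ : ℝ) (hτ : 1 ≤ τ) :
    gaussianReal 0 1 (Ioi τ) ≤ ENNReal.ofReal (Real.exp (-τ^2/2) / 2) := by
  rw [gaussianReal_apply_eq_integral 0 (by norm_num) (Ioi τ)]
  apply ENNReal.ofReal_le_ofReal
  have h2s : (2:ℝ) ≤ Real.sqrt (2 * Real.pi) := by
    exact (Real.le_sqrt' (by norm_num)).mpr (by nlinarith [Real.pi_gt_three])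
  have hc : (Real.sqrt (2 * Real.pi))⁻¹ ≤ 1/2 := by
    rw [show (1/2:ℝ) = 2⁻¹ by norm_num]
    exact inv_anti₀ (by norm_num) h2s
  have hpdf_le : ∀ x ∈ Ioi τ, gaussianPDFReal 0 1 x ≤
      (1/2) * Real.exp (τ^2/2) * Real.exp (-(τ * x)) := by
    intro x _
    rw [gaussianPDFReal_def]
    simp only [NNReal.coe_one, mul_one, sub_zero]
    have h1 : Real.exp (-x^2/2) ≤ Real.exp (τ^2/2) * Real.exp (-(τ*x)) := by
      rw [← Real.exp_add]
      apply Real.exp_le_exp.mpr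
      nlinarith [sq_nonneg (x - τ)]
    calc (Real.sqrt (2*Real.pi))⁻¹ * Real.exp (-x^2/2)
        ≤ (1/2) * (Real.exp (τ^2/2) * Real.exp (-(τ*x))) :=
          mul_le_mul hc h1 (Real.exp_nonneg _) (by norm_num)
      _ = (1/2) * Real.exp (τ^2/2) * Real.exp (-(τ*x)) := by ring
  have hInt2 : IntegrableOn (fun x => (1/2) * Real.exp (τ^2/2) * Real.exp (-(τ*x))) (Ioi τ) := by
    apply Integrable.const_mul
    exact (by simpa [neg_mul] using exp_neg_integrableOn_Ioi τ (by linarith : (0:ℝ) < τ) :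
      IntegrableOn (fun x => Real.exp (-(τ*x))) (Ioi τ))
  have hmono : ∫ x in Ioi τ, gaussianPDFReal 0 1 x ≤
      ∫ x in Ioi τ, (1/2) * Real.exp (τ^2/2) * Real.exp (-(τ*x)) := by
    apply setIntegral_mono_on (integrable_gaussianPDFReal 0 1).integrableOn hInt2
      measurableSet_Ioi hpdf_le
  have hval : ∫ x in Ioi τ, (1/2) * Real.exp (τ^2/2) * Real.exp (-(τ*x)) =
      (1/2) * Real.exp (τ^2/2) * (τ⁻¹ * Real.exp (-τ^2)) := by
    rw [MeasureTheory.integral_const_mul]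
    congr 1
    have := integral_comp_mul_left_Ioi (fun x => Real.exp (-x)) τ (by linarith : (0:ℝ) < τ)
    simp only [smul_eq_mul] at this
    rw [show (fun x => Real.exp (-(τ*x))) = (fun x => Real.exp (-(τ*x))) from rfl]
    calc (∫ x in Ioi τ, Real.exp (-(τ*x))) = τ⁻¹ * ∫ x in Ioi (τ*τ), Real.exp (-x) := this
      _ = τ⁻¹ * Real.exp (-(τ*τ)) := by rw [integral_exp_neg_Ioi]
      _ = τ⁻¹ * Real.exp (-τ^2) := by rw [← pow_two]
  calc ∫ x in Ioi τ, gaussianPDFReal 0 1 x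
      ≤ (1/2) * Real.exp (τ^2/2) * (τ⁻¹ * Real.exp (-τ^2)) := hmono.trans (le_of_eq hval)
    _ = (1/2) * τ⁻¹ * (Real.exp (τ^2/2) * Real.exp (-τ^2)) := by ring
    _ = (1/2) * τ⁻¹ * Real.exp (-τ^2/2) := by rw [← Real.exp_add]; ring_nf
    _ ≤ Real.exp (-τ^2/2)/2 := by
        have hτi : τ⁻¹ ≤ 1 := by
          rw [inv_le_one_iff₀]; right; linarith
        have := Real.exp_nonneg (-τ^2/2)
        nlinarith [inv_nonneg.mpr (by linarith : (0:ℝ) ≤ τ)]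

lemma gauss_tail (τ : ℝ) (hτ : 1 ≤ τ) :
    gaussianReal 0 1 {x | τ < |x|} ≤ ENNReal.ofReal (Real.exp (-τ^2/2)) := by
  have hsub : {x : ℝ | τ < |x|} ⊆ Iio (-τ) ∪ Ioi τ := by
    intro x hx
    simp only [Set.mem_setOf_eq, lt_abs] at hx
    rcases hx with h | h
    · exact Or.inr h
    · exact Or.inl (by simp only [Set.mem_Iio]; linarith)
  have hsym : gaussianReal 0 1 (Iio (-τ)) = gaussianReal 0 1 (Ioi τ) := by
    have hmap : (gaussianReal 0 1).map ((-1 : ℝ) * ·) = gaussianReal 0 1 := by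
      rw [gaussianReal_map_const_mul (-1 : ℝ)]
      norm_num
    conv_lhs => rw [← hmap]
    rw [Measure.map_apply (measurable_id'.const_mul (-1)) measurableSet_Iio]
    congr 1
    ext x
    simp only [Set.mem_preimage, Set.mem_Iio, Set.mem_Ioi]
    constructor <;> intro h <;> nlinarith
  calc gaussianReal 0 1 {x | τ < |x|} ≤ gaussianReal 0 1 (Iio (-τ) ∪ Ioi τ) :=
        measure_mono hsub
    _ ≤ gaussianReal 0 1 (Iio (-τ)) + gaussianReal 0 1 (Ioi τ) := measure_union_le _ _
    _ = gaussianReal 0 1 (Ioi τ) + gaussianReal 0 1 (Ioi τ) := by rw [hsym]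
    _ ≤ ENNReal.ofReal (Real.exp (-τ^2/2)/2) + ENNReal.ofReal (Real.exp (-τ^2/2)/2) := by
        exact add_le_add (gauss_tail_one_sided τ hτ) (gauss_tail_one_sided τ hτ)
    _ = ENNReal.ofReal (Real.exp (-τ^2/2)/2 + Real.exp (-τ^2/2)/2) := by
        rw [ENNReal.ofReal_add (by positivity) (by positivity)]
    _ = ENNReal.ofReal (Real.exp (-τ^2/2)) := by norm_num

lemma pi_cyl {ι : Type*} [Fintype ι] [DecidableEq ι] (f : ι → Set ℝ) (i : ι)
    (hA : MeasurableSet (f i)) :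
    Measure.pi (fun _ : ι => gaussianReal 0 1) {W : ι → ℝ | W i ∈ f i} =
      gaussianReal 0 1 (f i) := by
  have : {W : ι → ℝ | W i ∈ f i} =
      Set.pi Set.univ (fun j => if j = i then f i else Set.univ) := by
    ext W
    simp only [Set.mem_setOf_eq, Set.mem_pi, Set.mem_univ, true_implies]
    constructor
    · intro h j
      by_cases hj : j = i
      · subst hj; simp [h]
      · simp [hj]
    · intro h
      have := h i
      simpa using this
  rw [this, Measure.pi_pi]
  rw [Finset.prod_eq_single i (fun j _ hj => by simp [hj]) (by simp)]
  simp

lemma event_prob (n r : ℕ) (hn : 2 ≤ n) (hr : 2 ≤ r) :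
    ENNReal.ofReal (1 - (n : ℝ) ^ (-(1/2) : ℝ)) ≤
      Measure.pi (fun _ : Fin r → Fin n => gaussianReal 0 1)
        {W : (Fin r → Fin n) → ℝ |
          ∀ f, |W f| ≤ (Real.sqrt (2*r) + 1) * Real.sqrt (Real.log n)} := by
  set τ : ℝ := (Real.sqrt (2*r) + 1) * Real.sqrt (Real.log n) with hτdef
  set μ := Measure.pi (fun _ : Fin r → Fin n => gaussianReal 0 1) with hμ
  have hn1 : (1:ℝ) < n := by exact_mod_cast Nat.lt_of_lt_of_le one_lt_two hn
  have hlogpos : 0 < Real.log n := Real.log_pos hn1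
  have hsq2r : 2 ≤ Real.sqrt (2*r) := by
    apply (Real.le_sqrt' (by norm_num)).mpr
    have : (2:ℝ) ≤ r := by exact_mod_cast hr
    nlinarith
  have hlog2 : Real.log 2 ≤ Real.log n := by
    apply Real.log_le_log (by norm_num)
    exact_mod_cast hn
  have hsqlog : (1:ℝ)/3 ≤ Real.sqrt (Real.log n) := by
    apply (Real.le_sqrt' (by norm_num)).mpr
    have := Real.log_two_gt_d9
    nlinarith
  have hτ1 : 1 ≤ τ := by
    rw [hτdef]
    nlinarith [Real.sqrt_nonneg (Real.log n)]
  -- the event and its complement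
  set E : Set ((Fin r → Fin n) → ℝ) := {W | ∀ f, |W f| ≤ τ} with hE
  have hEmeas : MeasurableSet E := by
    have : E = ⋂ f, {W : (Fin r → Fin n) → ℝ | |W f| ≤ τ} := by
      ext W; simp [hE, Set.mem_iInter]
    rw [this]
    exact MeasurableSet.iInter fun f =>
      measurableSet_le ((measurable_pi_apply f).abs) measurable_const
  have hcompl : μ Eᶜ ≤ ENNReal.ofReal ((n:ℝ) ^ (-(1/2) : ℝ)) := by
    have hEc : Eᶜ = ⋃ f, {W : (Fin r → Fin n) → ℝ | W f ∈ {x : ℝ | τ < |x|}} := by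
      ext W
      simp [hE, Set.mem_iUnion, not_forall, not_le]
    have h1 : μ Eᶜ ≤ ∑' f : Fin r → Fin n, μ {W | W f ∈ {x : ℝ | τ < |x|}} := by
      rw [hEc]; exact measure_iUnion_le _
    have h2 : ∀ f : Fin r → Fin n, μ {W | W f ∈ {x : ℝ | τ < |x|}} ≤
        ENNReal.ofReal (Real.exp (-τ^2/2)) := by
      intro f
      rw [hμ, pi_cyl (fun _ => {x : ℝ | τ < |x|}) f]
      · exact gauss_tail τ hτ1
      · have : {x : ℝ | τ < |x|} = {x : ℝ | τ < |x|} := rfl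
        exact measurableSet_lt measurable_const measurable_abs
    calc μ Eᶜ ≤ ∑' f : Fin r → Fin n, μ {W | W f ∈ {x : ℝ | τ < |x|}} := h1
      _ ≤ ∑' (_f : Fin r → Fin n), ENNReal.ofReal (Real.exp (-τ^2/2)) :=
          ENNReal.tsum_le_tsum h2
      _ = (Fintype.card (Fin r → Fin n)) * ENNReal.ofReal (Real.exp (-τ^2/2)) := by
          rw [tsum_fintype]
          simp [Finset.sum_const, nsmul_eq_mul]
      _ = ((n^r : ℕ) : ℝ≥0∞) * ENNReal.ofReal (Real.exp (-τ^2/2)) := by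
          congr 2
          simp [Fintype.card_fun]
      _ = ENNReal.ofReal (((n:ℝ)^r) * Real.exp (-τ^2/2)) := by
          rw [ENNReal.ofReal_mul (by positivity)]
          congr 1
          rw [← ENNReal.ofReal_natCast]
          push_cast
          ring_nf
      _ ≤ ENNReal.ofReal ((n:ℝ) ^ (-(1/2) : ℝ)) := by
          apply ENNReal.ofReal_le_ofReal
          have hτsq : (2*(r:ℝ) + 5) * Real.log n ≤ τ^2 := by
            rw [hτdef, mul_pow, Real.sq_sqrt hlogpos.le]
            have h2r : Real.sqrt (2*r) ^ 2 = 2*r := Real.sq_sqrt (by positivity)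
            nlinarith
          have hexp : Real.exp (-τ^2/2) ≤ (n:ℝ) ^ (-((r:ℝ) + 5/2)) := by
            rw [Real.rpow_def_of_pos (by linarith)]
            apply Real.exp_le_exp.mpr
            nlinarith
          calc (n:ℝ)^r * Real.exp (-τ^2/2) ≤ (n:ℝ)^r * (n:ℝ) ^ (-((r:ℝ) + 5/2)) := by
                apply mul_le_mul_of_nonneg_left hexp (by positivity)
            _ = (n:ℝ) ^ ((r:ℝ) + -((r:ℝ) + 5/2)) := by
                rw [← Real.rpow_natCast (n:ℝ) r, ← Real.rpow_add (by linarith)]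
            _ = (n:ℝ) ^ (-(5/2) : ℝ) := by norm_num
            _ ≤ (n:ℝ) ^ (-(1/2) : ℝ) :=
                Real.rpow_le_rpow_of_exponent_le (by linarith) (by norm_num)
  have hprob : μ E = 1 - μ Eᶜ := by
    have := prob_compl_eq_one_sub (μ := μ) hEmeas.compl
    rw [compl_compl] at this
    rw [this]
  rw [hprob]
  have ha1 : (n:ℝ) ^ (-(1/2) : ℝ) ≤ 1 := by
    apply Real.rpow_le_one_of_one_le_of_nonpos (by linarith) (by norm_num)
  calc ENNReal.ofReal (1 - (n : ℝ) ^ (-(1/2) : ℝ))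
      = ENNReal.ofReal 1 - ENNReal.ofReal ((n : ℝ) ^ (-(1/2) : ℝ)) := by
        rw [ENNReal.ofReal_sub _ (by positivity)]
    _ = 1 - ENNReal.ofReal ((n : ℝ) ^ (-(1/2) : ℝ)) := by rw [ENNReal.ofReal_one]
    _ ≤ 1 - μ Eᶜ := tsub_le_tsub_left hcompl 1

lemma sum_update_mul {n : ℕ} (σ θ : Fin n → ℝ) (m : Fin n) (v : ℝ) :
    ∑ i, Function.update σ m v i * θ i = (∑ i, σ i * θ i) + (v - σ m) * θ m := by
  have h : ∀ i, Function.update σ m v i * θ i =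
      σ i * θ i + (if i = m then (v - σ m) * θ m else 0) := by
    intro i
    by_cases hi : i = m
    · subst hi; simp [Function.update_self]; ring
    · simp [Function.update_of_ne hi, hi]
  simp_rw [h]
  rw [Finset.sum_add_distrib, Finset.sum_ite_eq' Finset.univ m]
  simp

lemma supp_update_zero {n : ℕ} (σ : Fin n → ℝ) (m : Fin n) (hm : σ m ≠ 0) :
    suppCard (Function.update σ m 0) = suppCard σ - 1 := by
  unfold suppCard
  have : (Finset.univ.filter (fun i => Function.update σ m 0 i ≠ 0)) =
      (Finset.univ.filter (fun i => σ i ≠ 0)).erase m := by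
    ext i
    by_cases hi : i = m
    · subst hi; simp [Function.update_self]
    · simp [Function.update_of_ne hi, hi]
  rw [this, Finset.card_erase_of_mem (by simp [hm])]

lemma supp_update_flip {n : ℕ} (σ : Fin n → ℝ) (m : Fin n) (v : ℝ) (hm : σ m ≠ 0)
    (hv : v ≠ 0) : suppCard (Function.update σ m v) = suppCard σ := by
  unfold suppCard
  congr 1
  ext i
  by_cases hi : i = m
  · subst hi; simp [Function.update_self, hv, hm]
  · simp [Function.update_of_ne hi]

lemma supp_update_add {n : ℕ} (σ : Fin n → ℝ) (m : Fin n) (v : ℝ) (hm : σ m = 0)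
    (hv : v ≠ 0) : suppCard (Function.update σ m v) = suppCard σ + 1 := by
  unfold suppCard
  have : (Finset.univ.filter (fun i => Function.update σ m v i ≠ 0)) =
      insert m (Finset.univ.filter (fun i => σ i ≠ 0)) := by
    ext i
    by_cases hi : i = m
    · subst hi; simp [Function.update_self, hv]
    · simp [Function.update_of_ne hi, hi]
  rw [this, Finset.card_insert_of_notMem (by simp [hm])]

lemma noise_bound (n r : ℕ) (hr : 1 ≤ r) (σ : Fin n → ℝ) (m : Fin n) (v : ℝ)
    (hσ : ∀ i, |σ i| ≤ 1) (hv : |v| ≤ 1) (hs2 : 2 ≤ suppCard σ)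
    (W : (Fin r → Fin n) → ℝ) (τ : ℝ) (hτ : 0 ≤ τ) (hW : ∀ f, |W f| ≤ τ) :
    |(∑ f : Fin r → Fin n, (∏ l, Function.update σ m v (f l)) * W f)
      - ∑ f : Fin r → Fin n, (∏ l, σ (f l)) * W f| ≤
    2 * 3^r * ((suppCard σ : ℝ) - 1)^(r-1) * τ := by
  set σ' := Function.update σ m v with hσ'def
  have hσ'abs : ∀ i, |σ' i| ≤ 1 := by
    intro i
    by_cases hi : i = m
    · subst hi; simpa [hσ'def, Function.update_self] using hv
    · simpa [hσ'def, Function.update_of_ne hi] using hσ i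
  have hagree : ∀ i, i ≠ m → σ' i = σ i := fun i hi => Function.update_of_ne hi _ _
  set T : Finset (Fin n) := insert m (univ.filter (fun i => σ i ≠ 0)) with hT
  have hl1 : ∑ f : Fin r → Fin n, |(∏ l, σ' (f l)) - (∏ l, σ (f l))| ≤
      2 * ((T.card : ℝ) ^ r - ((T.card : ℝ) - 1) ^ r) :=
    l1_bound n r σ σ' m hσ hσ'abs hagree
  have ht2 : (2:ℝ) ≤ (T.card : ℝ) := by
    have : suppCard σ ≤ T.card :=
      Finset.card_le_card (Finset.subset_insert _ _)
    exact_mod_cast le_trans hs2 this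
  have hts : (T.card : ℝ) ≤ (suppCard σ : ℝ) + 1 := by
    have : T.card ≤ suppCard σ + 1 := Finset.card_insert_le _ _
    exact_mod_cast this
  have hs2' : (2:ℝ) ≤ (suppCard σ : ℝ) := by exact_mod_cast hs2
  have hpow : (T.card : ℝ) ^ r - ((T.card : ℝ) - 1) ^ r ≤
      3 ^ r * ((suppCard σ : ℝ) - 1) ^ (r-1) :=
    pow_sub_pow_le r hr (suppCard σ : ℝ) (T.card : ℝ) hs2' ht2 hts
  calc |(∑ f : Fin r → Fin n, (∏ l, σ' (f l)) * W f)
      - ∑ f : Fin r → Fin n, (∏ l, σ (f l)) * W f|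
      = |∑ f : Fin r → Fin n, ((∏ l, σ' (f l)) - (∏ l, σ (f l))) * W f| := by
        rw [← Finset.sum_sub_distrib]
        congr 1
        apply Finset.sum_congr rfl
        intro f _
        ring
    _ ≤ ∑ f : Fin r → Fin n, |((∏ l, σ' (f l)) - (∏ l, σ (f l))) * W f| :=
        Finset.abs_sum_le_sum_abs _ _
    _ ≤ ∑ f : Fin r → Fin n, |(∏ l, σ' (f l)) - (∏ l, σ (f l))| * τ := by
        apply Finset.sum_le_sum
        intro f _
        rw [abs_mul]
        exact mul_le_mul_of_nonneg_left (hW f) (abs_nonneg _)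
    _ = (∑ f : Fin r → Fin n, |(∏ l, σ' (f l)) - (∏ l, σ (f l))|) * τ := by
        rw [Finset.sum_mul]
    _ ≤ (2 * ((T.card : ℝ) ^ r - ((T.card : ℝ) - 1) ^ r)) * τ :=
        mul_le_mul_of_nonneg_right hl1 hτ
    _ ≤ (2 * (3 ^ r * ((suppCard σ : ℝ) - 1) ^ (r-1))) * τ :=
        mul_le_mul_of_nonneg_right (by linarith) hτ
    _ = 2 * 3^r * ((suppCard σ : ℝ) - 1)^(r-1) * τ := by ring

end Aux

section Main
open Real Set

set_option maxHeartbeats 1000000 in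
lemma main_det (n r k : ℕ) (hn : 2 ≤ n) (hr : 2 ≤ r) (hk : 1 ≤ k)
    (θ : Fin n → ℝ) (hθ : ∀ m, θ m = -1 ∨ θ m = 0 ∨ θ m = 1)
    (Cγ Clam Cr C' γ lam : ℝ)
    (hCr : Cr = 2 * 3 ^ r * (Real.sqrt (2 * r) + 1))
    (hC' : C' = Cγ + Cr + 1)
    (hγ : γ = Cγ * Real.sqrt (Real.log n))
    (hlam : Clam * (k : ℝ) ^ ((r : ℝ) / 2) * Real.sqrt (Real.log n) ≤ lam)
    (hCγ : 1 + Cr ≤ Cγ) (hClam : C' ≤ Clam)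
    (W : (Fin r → Fin n) → ℝ)
    (hW : ∀ f, |W f| ≤ (Real.sqrt (2 * r) + 1) * Real.sqrt (Real.log n))
    (σ : Fin n → ℝ) (hA : memA n r k lam C' θ σ) (hne : σ ≠ θ) :
    ∃ σ' : Fin n → ℝ, (∀ m, σ' m = -1 ∨ σ' m = 0 ∨ σ' m = 1) ∧
      (Finset.univ.filter (fun m => σ m ≠ σ' m)).card = 1 ∧
      Ham n r k lam γ θ W σ < Ham n r k lam γ θ W σ' := by
  obtain ⟨hσ3, hA2, hs2, hM2⟩ := hA
  have hr1 : 1 ≤ r := by omega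
  have hr2 : (2:ℝ) ≤ (r:ℝ) := by exact_mod_cast hr
  have hL : 0 < Real.sqrt (Real.log n) := by
    apply Real.sqrt_pos.mpr
    apply Real.log_pos
    exact_mod_cast Nat.lt_of_lt_of_le one_lt_two hn
  set L : ℝ := Real.sqrt (Real.log n) with hLdef
  have hCr0 : 0 < Cr := by
    rw [hCr]
    have := Real.sqrt_nonneg (2 * (r:ℝ))
    positivity
  have hCγ0 : 0 < Cγ := by linarith
  have hC'0 : 0 < C' := by rw [hC']; linarith
  have hγ0 : 0 ≤ γ := by rw [hγ]; exact le_of_lt (mul_pos hCγ0 hL)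
  have hkp : (0:ℝ) < (k : ℝ) ^ ((r : ℝ) / 2) := by
    have : (0:ℝ) < (k:ℝ) := by exact_mod_cast hk
    positivity
  have hβ : Clam * L ≤ lam / (k : ℝ) ^ ((r : ℝ) / 2) := by
    rw [le_div_iff₀ hkp, show Clam * L * (k : ℝ) ^ ((r : ℝ) / 2)
      = Clam * (k : ℝ) ^ ((r : ℝ) / 2) * L from by ring]
    exact hlam
  have hβ0 : 0 ≤ lam / (k : ℝ) ^ ((r : ℝ) / 2) := by
    have : 0 < Clam * L := by
      apply mul_pos _ hL
      rw [hC'] at hClam; linarith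
    linarith
  have habs : ∀ i, |σ i| ≤ 1 := by
    intro i
    rcases hσ3 i with h | h | h <;> rw [h] <;> norm_num
  set s : ℝ := (suppCard σ : ℝ) with hsdef
  have hs2' : (2:ℝ) ≤ s := by rw [hsdef]; exact_mod_cast hs2
  set Q : ℝ := (s - 1) ^ (r - 1) with hQdef
  have hQ0 : 0 < Q := by rw [hQdef]; exact pow_pos (by linarith) _
  have hLQ : 0 < L * Q := mul_pos hL hQ0
  set M : ℝ := ∑ i, σ i * θ i with hMdef
  have hM0 : (0:ℝ) ≤ M := by linarith
  clear_value L s Q M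
  -- the noise bound for a single-coordinate update
  have hnb : ∀ (m : Fin n) (v : ℝ), |v| ≤ 1 →
      ((∑ f : Fin r → Fin n, (∏ l, σ (f l)) * W f)
        - ∑ f : Fin r → Fin n, (∏ l, Function.update σ m v (f l)) * W f ≤ Cr * (L * Q)) := by
    intro m v hv
    have h := noise_bound n r hr1 σ m v habs hv hs2 W ((Real.sqrt (2 * r) + 1) * L)
      (by positivity) hW
    have heq : 2 * 3 ^ r * ((suppCard σ : ℝ) - 1) ^ (r - 1) * ((Real.sqrt (2 * r) + 1) * L)
        = Cr * (L * Q) := by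
      rw [hCr, hQdef, hsdef]; ring
    rw [heq] at h
    linarith [(abs_le.mp h).1]
  -- generic facts about single-coordinate updates
  have hham : ∀ (m : Fin n) (v : ℝ), v ≠ σ m →
      (Finset.univ.filter (fun i => σ i ≠ Function.update σ m v i)).card = 1 := by
    intro m v hv
    have hfe : (Finset.univ.filter (fun i => σ i ≠ Function.update σ m v i)) = {m} := by
      ext i
      simp only [Finset.mem_filter, Finset.mem_univ, true_and, Finset.mem_singleton]
      by_cases hi : i = m
      · subst hi
        simp only [Function.update_self]
        exact iff_true_intro (fun hc => hv hc.symm)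
      · simp [Function.update_of_ne hi, hi]
    rw [hfe, Finset.card_singleton]
  have hent : ∀ (m : Fin n) (v : ℝ), (v = -1 ∨ v = 0 ∨ v = 1) →
      ∀ i, Function.update σ m v i = -1 ∨ Function.update σ m v i = 0 ∨
        Function.update σ m v i = 1 := by
    intro m v hv i
    by_cases hi : i = m
    · subst hi; rw [Function.update_self]; exact hv
    · rw [Function.update_of_ne hi]; exact hσ3 i
  by_cases hc1 : ∃ m, σ m ≠ 0 ∧ θ m = 0
  · -- Case 1 : drop a coordinate outside the support of θ
    obtain ⟨m, hσm, hθm⟩ := hc1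
    refine ⟨Function.update σ m 0, hent m 0 (by norm_num), hham m 0 (fun h => hσm h.symm), ?_⟩
    have hM' : ∑ i, Function.update σ m 0 i * θ i = M := by
      rw [sum_update_mul, hθm, hMdef]; ring
    have hnoise := hnb m 0 (by norm_num)
    have hpg := pow_sub_pow_ge r s (s - 1) (by linarith) (by linarith)
    have e1 : 2 * Q ≤ s ^ r - (s - 1) ^ r := by
      rw [hQdef]
      nlinarith [pow_nonneg (by linarith : (0:ℝ) ≤ s - 1) (r - 1)]
    have e2 : γ * (2 * Q) ≤ γ * (s ^ r - (s - 1) ^ r) :=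
      mul_le_mul_of_nonneg_left e1 hγ0
    have e3 : γ * (2 * Q) = 2 * Cγ * (L * Q) := by rw [hγ]; ring
    have e4 : γ * (s ^ r - (s - 1) ^ r) = γ * s ^ r - γ * (s - 1) ^ r := by ring
    have fact5 : Cr * (L * Q) < 2 * Cγ * (L * Q) := by nlinarith
    rw [Ham_eq, Ham_eq, hM', supp_update_zero σ m hσm,
      Nat.cast_sub (by omega : 1 ≤ suppCard σ), Nat.cast_one, ← hMdef, ← hsdef]
    linarith
  by_cases hc2 : ∃ m, σ m ≠ 0 ∧ σ m = -θ m
  · -- Case 2 : flip a wrong sign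
    obtain ⟨m, hσm, hflip⟩ := hc2
    have hθm : θ m ≠ 0 := by
      intro hc; apply hσm; rw [hflip, hc]; ring
    have hθ2 : θ m * θ m = 1 := by
      rcases hθ m with h | h | h
      · rw [h]; norm_num
      · exact absurd h hθm
      · rw [h]; norm_num
    have hvne : θ m ≠ σ m := by
      intro hc
      apply hθm
      have : θ m = -θ m := by rw [hc] at hflip ⊢; exact hflip.symm ▸ hflip
      linarith [this]
    refine ⟨Function.update σ m (θ m), hent m (θ m) (hθ m), hham m (θ m) hvne, ?_⟩
    have hM' : ∑ i, Function.update σ m (θ m) i * θ i = M + 2 := by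
      rw [sum_update_mul, hflip, ← hMdef]
      linear_combination 2 * hθ2
    have hnoise := hnb m (θ m) (by rcases hθ m with h | h | h <;> rw [h] <;> norm_num)
    have hpg := pow_sub_pow_ge r (M + 2) M hM0 (by linarith)
    have hmm : (M - 1) ^ (r - 1) ≤ M ^ (r - 1) :=
      pow_le_pow_left₀ (by linarith) (by linarith) _
    have e1 : 4 * (M - 1) ^ (r - 1) ≤ (M + 2) ^ r - M ^ r := by
      nlinarith [pow_nonneg (by linarith : (0:ℝ) ≤ M - 1) (r - 1),
        pow_nonneg hM0 (r - 1)]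
    have e2 : (lam / (k : ℝ) ^ ((r : ℝ) / 2)) * (4 * (M - 1) ^ (r - 1)) ≤
        (lam / (k : ℝ) ^ ((r : ℝ) / 2)) * ((M + 2) ^ r - M ^ r) :=
      mul_le_mul_of_nonneg_left e1 hβ0
    have e3 : (lam / (k : ℝ) ^ ((r : ℝ) / 2)) * ((M + 2) ^ r - M ^ r) =
        (lam / (k : ℝ) ^ ((r : ℝ) / 2)) * (M + 2) ^ r
          - (lam / (k : ℝ) ^ ((r : ℝ) / 2)) * M ^ r := by ring
    have hA2' : C' * (L * Q) ≤ (lam / (k : ℝ) ^ ((r : ℝ) / 2)) * (M - 1) ^ (r - 1) :=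
      le_of_eq_of_le (by ring) hA2
    have e4 : (lam / (k : ℝ) ^ ((r : ℝ) / 2)) * (4 * (M - 1) ^ (r - 1)) =
        4 * ((lam / (k : ℝ) ^ ((r : ℝ) / 2)) * (M - 1) ^ (r - 1)) := by ring
    have fact5 : Cr * (L * Q) < 4 * (C' * (L * Q)) := by
      rw [hC']; nlinarith
    rw [Ham_eq, Ham_eq, hM', supp_update_flip σ m (θ m) hσm hθm, ← hMdef, ← hsdef]
    linarith
  · -- Case 3 : add a coordinate of θ
    push_neg at hc1 hc2
    have hpt : ∀ i, σ i = 0 ∨ (σ i = θ i ∧ θ i ≠ 0) := by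
      intro i
      by_cases h0 : σ i = 0
      · exact Or.inl h0
      · right
        have hθi := hc1 i h0
        have hni := hc2 i h0
        refine ⟨?_, hθi⟩
        rcases hσ3 i with h | h | h <;> rcases hθ i with h' | h' | h' <;>
          simp_all <;> norm_num at hni ⊢
    have hex : ∃ m, σ m = 0 ∧ θ m ≠ 0 := by
      by_contra hc
      push_neg at hc
      apply hne
      funext i
      rcases hpt i with h | h
      · rw [h, hc i h]
      · exact h.1
    obtain ⟨m, hσm, hθm⟩ := hex
    have hθ2 : θ m * θ m = 1 := by
      rcases hθ m with h | h | h
      · rw [h]; norm_num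
      · exact absurd h hθm
      · rw [h]; norm_num
    have hvne : θ m ≠ σ m := by rw [hσm]; exact hθm
    refine ⟨Function.update σ m (θ m), hent m (θ m) (hθ m), hham m (θ m) hvne, ?_⟩
    have hMs : M = s := by
      rw [hMdef, hsdef]
      have h1 : ∀ i, σ i * θ i = if σ i ≠ 0 then (1:ℝ) else 0 := by
        intro i
        rcases hpt i with h | h
        · simp [h]
        · have : σ i ≠ 0 := by rw [h.1]; exact h.2
          rw [if_pos this, h.1]
          rcases hθ i with h' | h' | h' <;> first | (exact absurd h' h.2) | (rw [h']; norm_num)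
      simp_rw [h1]
      rw [Finset.sum_boole]
      rfl
    have hM' : ∑ i, Function.update σ m (θ m) i * θ i = M + 1 := by
      rw [sum_update_mul, hσm, ← hMdef]
      linear_combination hθ2
    have hnoise := hnb m (θ m) (by rcases hθ m with h | h | h <;> rw [h] <;> norm_num)
    have hpg := pow_sub_pow_ge r (s + 1) s (by linarith) (by linarith)
    have hmm : (s - 1) ^ (r - 1) ≤ s ^ (r - 1) :=
      pow_le_pow_left₀ (by linarith) (by linarith) _
    have e1 : 2 * Q ≤ (s + 1) ^ r - s ^ r := by
      rw [hQdef]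
      nlinarith [pow_nonneg (by linarith : (0:ℝ) ≤ s - 1) (r - 1),
        pow_nonneg (by linarith : (0:ℝ) ≤ s) (r - 1)]
    have hβγ : (Cr + 1) * L ≤ lam / (k : ℝ) ^ ((r : ℝ) / 2) - γ := by
      rw [hγ]
      nlinarith [hβ, hL]
    have hβγ0 : 0 ≤ lam / (k : ℝ) ^ ((r : ℝ) / 2) - γ := by
      have : 0 ≤ (Cr + 1) * L := by positivity
      linarith
    have e2 : (lam / (k : ℝ) ^ ((r : ℝ) / 2) - γ) * (2 * Q) ≤
        (lam / (k : ℝ) ^ ((r : ℝ) / 2) - γ) * ((s + 1) ^ r - s ^ r) :=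
      mul_le_mul_of_nonneg_left e1 hβγ0
    have e3 : (Cr + 1) * L * (2 * Q) ≤ (lam / (k : ℝ) ^ ((r : ℝ) / 2) - γ) * (2 * Q) :=
      mul_le_mul_of_nonneg_right hβγ (by positivity)
    have e3' : (Cr + 1) * L * (2 * Q) = 2 * ((Cr + 1) * (L * Q)) := by ring
    have fact5 : Cr * (L * Q) < 2 * ((Cr + 1) * (L * Q)) := by nlinarith
    have expand : (lam / (k : ℝ) ^ ((r : ℝ) / 2) - γ) * ((s + 1) ^ r - s ^ r) =
        (lam / (k : ℝ) ^ ((r : ℝ) / 2)) * (s + 1) ^ r - γ * (s + 1) ^ r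
          - ((lam / (k : ℝ) ^ ((r : ℝ) / 2)) * s ^ r - γ * s ^ r) := by ring
    rw [Ham_eq, Ham_eq, hM', supp_update_add σ m (θ m) hσm hθm, Nat.cast_add,
      Nat.cast_one, ← hMdef, ← hsdef, hMs]
    linarith

end Main

/-- with probability at least 1 − n^{−1/2}, the only local maximum
of H in A is θ: every σ ∈ A with σ ≠ θ has a Hamming-distance-1 neighbor
σ' ∈ {−1,0,1}^n with H(σ') > H(σ). -/
theorem stmt_6 (n r k : ℕ) (hn : 2 ≤ n) (hr : 2 ≤ r) (hk : 1 ≤ k)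
    (θ : Fin n → ℝ) (hθ : ∀ m, θ m = -1 ∨ θ m = 0 ∨ θ m = 1) (hθk : suppCard θ = k)
    (C : ℝ) (hC : 0 < C) (hkC : (k : ℝ) ≤ C * Real.sqrt n)
    (Cγ Clam Cr C' γ lam : ℝ)
    (hCr : Cr = 2 * 3 ^ r * (Real.sqrt (2 * r) + 1))
    (hC' : C' = Cγ + Cr + 1)
    (hγ : γ = Cγ * Real.sqrt (Real.log n))
    (hlam : Clam * (k : ℝ) ^ ((r : ℝ) / 2) * Real.sqrt (Real.log n) ≤ lam)
    (hCγ : 1 + Cr ≤ Cγ) (hClam : C' ≤ Clam) :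
    ENNReal.ofReal (1 - (n : ℝ) ^ (-(1/2) : ℝ)) ≤
      Measure.pi (fun _ : Fin r → Fin n => gaussianReal 0 1)
        {W : (Fin r → Fin n) → ℝ |
          ∀ σ : Fin n → ℝ, memA n r k lam C' θ σ → σ ≠ θ →
          ∃ σ' : Fin n → ℝ, (∀ m, σ' m = -1 ∨ σ' m = 0 ∨ σ' m = 1) ∧
            (Finset.univ.filter (fun m => σ m ≠ σ' m)).card = 1 ∧
            Ham n r k lam γ θ W σ < Ham n r k lam γ θ W σ'} := by
  refine le_trans (event_prob n r hn hr) (measure_mono ?_)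
  intro W hW
  intro σ hA hne
  exact main_det n r k hn hr hk θ hθ Cγ Clam Cr C' γ lam hCr hC' hγ hlam hCγ hClam W hW σ hA hne
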